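/- Let k,m,c ≥ 0 be integers, let (G,s_1,t_1,…,s_k,t_k) be a problem instance, and let H be its (k,m,c)-tracker. Then every path in H from s_0 to t_0 traces some linkage for (G,s_1,t_1,…,s_k,t_k). -/

import Mathlib

open List

/-! Basic digraph/path definitions.  A digraph on `V` is a relation `G : V → V → Prop`
(looplessness is expressed by `Irreflexive G`).  A (directed) path is a nonempty list of
distinct vertices in which consecutive vertices are joined by edges of `G`. -/

/-- `uv` is an edge of the path `P`, i.e. `u,v` are consecutive on `P`. -/
def PEdge {V : Type} (P : List V) (u v : V) : Prop := [u, v] <:+: P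

/-- `P` is a directed path of the digraph `G`. -/
def IsPath {V : Type} (G : V → V → Prop) (P : List V) : Prop :=
  P ≠ [] ∧ P.Nodup ∧ P.Chain' G

/-- `P` is a minimal path of `G`: for every edge `v_i v_j` of `G` between vertices of `P`,
`j ≤ i + 1`. -/
def IsMinimal {V : Type} (G : V → V → Prop) (P : List V) : Prop :=
  ∀ i j : Fin P.length, G (P.get i) (P.get j) → (j : ℕ) ≤ (i : ℕ) + 1

/-- `G` is `d`-path-dominant. -/
def PathDominant {V : Type} (d : ℕ) (G : V → V → Prop) : Prop :=
  ∀ P : List V, IsPath G P → IsMinimal G P → P.length = d →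
    ∀ v : V, v ∈ P ∨ (∃ w ∈ P, G v w) ∨ (∃ w ∈ P, G w v)

/-- A linkage: a tuple of pairwise vertex-disjoint paths. -/
def IsLinkage {V : Type} (G : V → V → Prop) {k : ℕ} (L : Fin k → List V) : Prop :=
  (∀ i, IsPath G (L i)) ∧ ∀ i j : Fin k, i ≠ j → ∀ v, v ∈ L i → v ∉ L j

/-- `v` is `Q`-outward: `v ∉ Q` and no vertex of `Q` is adjacent from `v`. -/
def Outward {V : Type} (G : V → V → Prop) (Q : List V) (v : V) : Prop :=
  v ∉ Q ∧ ∀ w ∈ Q, ¬ G v w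

/-- `v` is `Q`-inward: `v ∉ Q` and no vertex of `Q` is adjacent to `v`. -/
def Inward {V : Type} (G : V → V → Prop) (Q : List V) (v : V) : Prop :=
  v ∉ Q ∧ ∀ w ∈ Q, ¬ G w v

section Inhab
variable {V : Type} [Inhabited V]

/-- A linkage for the problem instance `(G, s₁, t₁, …, s_k, t_k)`. -/
def IsLinkageFor (G : V → V → Prop) {k : ℕ} (s t : Fin k → V) (L : Fin k → List V) : Prop :=
  IsLinkage G L ∧ ∀ i, (L i).head! = s i ∧ (L i).getLast! = t i

/-- `x` is a quality: there is an `x`-linkage for the instance. -/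
def IsQuality (G : V → V → Prop) {k : ℕ} (s t : Fin k → V) (x : Fin k → ℕ) : Prop :=
  ∃ L : Fin k → List V, IsLinkageFor G s t L ∧ ∀ i, (L i).length = x i

/-- `x` is a key quality: a quality not strictly dominating any other quality. -/
def IsKeyQuality (G : V → V → Prop) {k : ℕ} (s t : Fin k → V) (x : Fin k → ℕ) : Prop :=
  IsQuality G s t x ∧ ¬ ∃ y : Fin k → ℕ, IsQuality G s t y ∧ y ≤ x ∧ y ≠ x

/-- `v` is an internal vertex of the linkage `M`. -/
def Internal {k : ℕ} (M : Fin k → List V) (v : V) : Prop :=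
  (∃ i, v ∈ M i) ∧ ∀ i, v ≠ (M i).head! ∧ v ≠ (M i).getLast!

/-- The linkage `M` is internally disjoint from the linkage `L`. -/
def InternallyDisjointFrom {k l : ℕ} (M : Fin k → List V) (L : Fin l → List V) : Prop :=
  ∀ v, Internal M v → ∀ i, v ∉ L i

/-- A planar `(Q,R)`-matching of cardinality `n`. -/
def IsPlanarMatching (G : V → V → Prop) (Q R : List V) {n : ℕ} (M : Fin n → List V) : Prop :=
  IsLinkage G M ∧ (∀ j, (M j).length = 2 ∨ (M j).length = 3) ∧
  (List.ofFn fun j => (M j).head!).Sublist Q ∧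
  (List.ofFn fun j => (M j).getLast!).Sublist R

/-- A planar `(Q,R)`-matching is `s`-spaced. -/
def SSpaced (Q R : List V) {n : ℕ} (M : Fin n → List V) (s : ℕ) : Prop :=
  (∀ W : List V, W <:+: Q → W.length ≤ s →
    ∀ j j' : Fin n, (∃ v ∈ W, v ∈ M j) → (∃ v ∈ W, v ∈ M j') → j = j') ∧
  (∀ W : List V, W <:+: R → W.length ≤ s →
    ∀ j j' : Fin n, (∃ v ∈ W, v ∈ M j) → (∃ v ∈ W, v ∈ M j') → j = j')

/-- `A(L)`: vertices outside `V(L)` that are `(M_j ∖ t(M_j))`-inward for some `j`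
with `t(M_j) ≠ t_j`. -/
def RailA (G : V → V → Prop) {k : ℕ} (t : Fin k → V) (L : Fin k → List V) : Set V :=
  {v | (∀ i, v ∉ L i) ∧ ∃ j, (L j).getLast! ≠ t j ∧ ∀ w ∈ (L j).dropLast, ¬ G w v}

/-- `B(L)`: vertices outside `V(L)` that are `(M_j ∖ s(M_j))`-outward for some `j`
with `s(M_j) ≠ s_j`. -/
def RailB (G : V → V → Prop) {k : ℕ} (s : Fin k → V) (L : Fin k → List V) : Set V :=
  {v | (∀ i, v ∉ L i) ∧ ∃ j, (L j).head! ≠ s j ∧ ∀ w ∈ (L j).tail, ¬ G v w}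

/-- The confusion of the linkage `L`, namely `|A(L) ∩ B(L)|`. -/
noncomputable def Confusion (G : V → V → Prop) {k : ℕ} (s t : Fin k → V)
    (L : Fin k → List V) : ℕ :=
  (RailA G t L ∩ RailB G s L).ncard

/-- `(L, X, Y)` is a `(k,m,c)`-rail in the problem instance. -/
def IsRail (G : V → V → Prop) {k : ℕ} (s t : Fin k → V) (m c : ℕ)
    (L : Fin k → List V) (X Y : Set V) : Prop :=
  IsLinkage G L ∧
  (∀ j, (L j).length ≤ 2*m ∧
    ((L j).length < 2*m → (L j).head! = s j ∨ (L j).getLast! = t j)) ∧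
  Confusion G s t L ≤ c ∧
  Disjoint X Y ∧
  X ⊆ RailA G t L ∧ Y ⊆ RailB G s L ∧ X ∪ Y = RailA G t L ∪ RailB G s L

end Inhab

/-- The data of a potential rail: a `k`-tuple of paths together with two vertex sets. -/
abbrev RailT (V : Type) (k : ℕ) := (Fin k → List V) × Set V × Set V

section Inhab2
variable {V : Type} [Inhabited V]

/-- The edge relation `(L,X,Y) → (L',X',Y')` between distinct rails. -/
def RailStep (G : V → V → Prop) {k : ℕ} (r r' : RailT V k) : Prop :=
  r ≠ r' ∧
  (∀ i, ∃ W : List V, IsPath G W ∧ W.head! = (r.1 i).head! ∧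
    W.getLast! = (r'.1 i).getLast! ∧
    (∀ v, v ∈ W ↔ v ∈ r.1 i ∨ v ∈ r'.1 i) ∧
    (∀ u v, PEdge W u v ↔ PEdge (r.1 i) u v ∨ PEdge (r'.1 i) u v)) ∧
  (∀ i, ∀ v ∈ r'.1 i, v ∈ r.1 i ∨ v ∈ r.2.1) ∧
  (∀ i, ∀ v ∈ r.1 i, v ∈ r'.1 i ∨ v ∈ r'.2.2) ∧
  r'.2.1 ⊆ r.2.1 ∧ r.2.2 ⊆ r'.2.2

/-- A path from `s₀` to `t₀` in the `(k,m,c)`-tracker, recorded by its list of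
intermediate rail vertices. -/
def IsTrackerPath (G : V → V → Prop) {k : ℕ} (s t : Fin k → V) (m c : ℕ)
    (rs : List (RailT V k)) : Prop :=
  rs ≠ [] ∧ rs.Nodup ∧ rs.Chain' (RailStep G) ∧
  (∀ r ∈ rs, IsRail G s t m c r.1 r.2.1 r.2.2) ∧
  (∀ r ∈ rs.head?, ∀ j, (r.1 j).head! = s j) ∧
  (∀ r ∈ rs.getLast?, ∀ j, (r.1 j).getLast! = t j)

end Inhab2

/-- A tracker path traces the linkage `P`: each `P j` is the union (as a digraph) of the
`j`-th members of the rails of the path. -/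
def Traces {V : Type} {k : ℕ} (rs : List (RailT V k)) (P : Fin k → List V) : Prop :=
  ∀ j, (∀ v, v ∈ P j ↔ ∃ r ∈ rs, v ∈ r.1 j) ∧
       (∀ u v, PEdge (P j) u v ↔ ∃ r ∈ rs, PEdge (r.1 j) u v)

section Dec
variable {V : Type} [DecidableEq V]

/-- `V(L)`, the set of vertices of the linkage `L`, as a finset. -/
def LV {k : ℕ} (L : Fin k → List V) : Finset V :=
  Finset.univ.biUnion fun i => (L i).toFinset

/-- `B` is acceptable for the linkage `L` (with parameters `d, k`). -/
def Acceptable [Inhabited V] (G : V → V → Prop) (d k : ℕ) (L : Fin k → List V)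
    (B : Finset V) : Prop :=
  (∀ j : Fin k, ∀ u v : V, PEdge (L j) u v → v ∈ B → u ∈ B) ∧
  ∀ i j : Fin k, ¬ ∃ M : Fin ((k-1)*d + k^2 + 2) → List V,
    IsPlanarMatching G ((L i).filter (· ∈ B)) ((L j).filter (· ∉ B)) M ∧
    InternallyDisjointFrom M L

/-- Labels along a tracker path, after the first rail: consecutive rails `r, r'`
contribute `|V(M'_j) ∖ V(M_j)|` in coordinate `j`. -/
def labelFrom {k : ℕ} : RailT V k → List (RailT V k) → (Fin k → ℕ)
  | _, [] => fun _ => 0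
  | r, r' :: rest => (fun j => ((r'.1 j).toFinset \ (r.1 j).toFinset).card) + labelFrom r' rest

/-- The total label `l(P)` of a tracker path with rail list `rs`: the edge from `s₀`
contributes `|V(M_j)|`, each rail-to-rail edge contributes the difference counts, and the
edge to `t₀` contributes `0`. -/
def pathLabel {k : ℕ} : List (RailT V k) → (Fin k → ℕ)
  | [] => fun _ => 0
  | r :: rest => (fun j => (r.1 j).toFinset.card) + labelFrom r rest

/-- `Q_{p,j}`: the maximal subpath of `P` with at most `m` vertices whose last vertex is
the last vertex of `P` among `v_1, …, v_p` (null if there is none). -/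
def Qseg (m : ℕ) (e : List V) (p : ℕ) (P : List V) : List V :=
  (P.filter (· ∈ e.take p)).drop ((P.filter (· ∈ e.take p)).length - m)

/-- `R_{p,j}`: the maximal subpath of `P` with at most `m` vertices whose first vertex is
the first vertex of `P` among `v_{p+1}, …, v_n` (null if there is none). -/
def Rseg (m : ℕ) (e : List V) (p : ℕ) (P : List V) : List V :=
  (P.filter (· ∈ e.drop p)).take m

/-- `M_{p,j} = Q_{p,j} ∪ R_{p,j}` (together with the connecting edge of `P` when both
are non-null). -/
def Mseg (m : ℕ) (e : List V) (p : ℕ) (P : List V) : List V :=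
  Qseg m e p P ++ Rseg m e p P

end Dec

section Aux
set_option linter.unusedSectionVars false
variable {V : Type} [Inhabited V]

lemma head?_some {l : List V} (h : l ≠ []) : l.head? = some l.head! := by
  cases l with | nil => simp at h | cons a t => rfl

lemma getLast?_some {l : List V} (h : l ≠ []) : l.getLast? = some l.getLast! := by
  induction l with
  | nil => simp at h
  | cons a tl ih =>
    cases tl with
    | nil => rfl
    | cons b t' => rw [List.getLast?_cons_cons, ih (by simp)]; rfl

lemma head!_eq_of_head?_eq {l l' : List V} (h : l ≠ []) (h' : l' ≠ [])
    (e : l.head? = l'.head?) : l.head! = l'.head! := by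
  rw [head?_some h, head?_some h'] at e; exact Option.some.inj e

lemma pedge_nil {u v : V} : ¬ PEdge [] u v := by
  rintro ⟨s, t, h⟩; simp at h

lemma pedge_cons {x u v : V} {l : List V} :
    PEdge (x :: l) u v ↔ (u = x ∧ l.head? = some v) ∨ PEdge l u v := by
  constructor
  · rintro ⟨s, t, h⟩
    cases s with
    | nil =>
      simp only [List.nil_append, List.cons_append, List.cons.injEq] at h
      obtain ⟨rfl, rfl⟩ := h
      exact Or.inl ⟨rfl, rfl⟩
    | cons a s' =>
      simp only [List.cons_append, List.cons.injEq] at h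
      exact Or.inr ⟨s', t, h.2⟩
  · rintro (⟨rfl, hv⟩ | h)
    · cases l with
      | nil => simp at hv
      | cons b t => exact ⟨[], t, by simpa using (Option.some.inj hv) ▸ rfl⟩
    · exact h.trans (List.suffix_cons x l).isInfix

lemma pedge_mem_left {u v : V} {l : List V} (h : PEdge l u v) : u ∈ l :=
  h.subset (by simp)

lemma pedge_mem_right {u v : V} {l : List V} (h : PEdge l u v) : v ∈ l :=
  h.subset (by simp)

lemma pedge_mono {u v : V} {l l' : List V} (h : PEdge l u v) (hl : l <:+: l') : PEdge l' u v :=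
  h.trans hl

lemma pedge_reverse {u v : V} {l : List V} : PEdge l.reverse u v ↔ PEdge l v u := by
  have h := @List.reverse_infix V [v, u] l
  simpa [PEdge] using h
end Aux
section Aux2
set_option linter.unusedSectionVars false
variable {V : Type} [Inhabited V]

lemma pedge_append {u v : V} {X Y : List V} :
    PEdge (X ++ Y) u v ↔
      PEdge X u v ∨ PEdge Y u v ∨ (X.getLast? = some u ∧ Y.head? = some v) := by
  induction X with
  | nil => simp [pedge_nil]
  | cons x X' ih =>
    rw [List.cons_append, pedge_cons, ih, pedge_cons (l := X')]
    cases X' with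
    | nil =>
      simp only [List.nil_append, List.getLast?_singleton, List.getLast?_nil,
        List.head?_nil, pedge_nil, Option.some.injEq]
      tauto
    | cons y X'' =>
      rw [List.head?_append, List.getLast?_cons_cons]
      simp only [List.head?_cons, Option.or_some]
      tauto
end Aux2
section Aux3
set_option linter.unusedSectionVars false
variable {V : Type} [Inhabited V]

lemma head!_reverse' {l : List V} (h : l ≠ []) : l.reverse.head! = l.getLast! := by
  have h1 := head?_some (l := l.reverse) (by simpa)
  rw [List.head?_reverse, getLast?_some h] at h1
  exact (Option.some.inj h1).symm

lemma prefix_of_path {A W : List V} (hW : W.Nodup) (hA : A.Nodup)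
    (hne : A ≠ []) (hWne : W ≠ []) (hh : A.head! = W.head!)
    (he : ∀ u v, PEdge A u v → PEdge W u v) : A <+: W := by
  induction A generalizing W with
  | nil => exact absurd rfl hne
  | cons x A' ih =>
    cases W with
    | nil => exact absurd rfl hWne
    | cons w W' =>
      have hxw : x = w := by simpa [List.head!_cons] using hh
      subst hxw
      cases A' with
      | nil => exact ⟨W', rfl⟩
      | cons y A'' =>
        have hxy : PEdge (x :: y :: A'') x y := ⟨[], A'', rfl⟩
        obtain ⟨sl, tl, hst⟩ := he _ _ hxy
        have hW' : W' = y :: tl := by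
          cases sl with
          | nil => simpa using hst.symm
          | cons a sl' =>
            exfalso
            rw [List.cons_append] at hst
            injection hst with h1 h2
            have : x ∈ W' := by rw [← h2, ← h1]; simp
            exact (List.nodup_cons.mp hW).1 this
        subst hW'
        have hx_notmem : x ∉ y :: A'' := (List.nodup_cons.mp hA).1
        have hpref : (y :: A'') <+: (y :: tl) := by
          apply ih (List.nodup_cons.mp hW).2 (List.nodup_cons.mp hA).2 (by simp) (by simp)
            (by rw [List.head!_cons, List.head!_cons])
          intro u v huv
          have hmemu : u ∈ y :: A'' := pedge_mem_left huv
          have hWuv : PEdge (x :: y :: tl) u v :=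
            he u v (pedge_mono huv (List.suffix_cons x (y :: A'')).isInfix)
          rcases pedge_cons.mp hWuv with ⟨rfl, _⟩ | h
          · exact absurd hmemu hx_notmem
          · exact h
        obtain ⟨rest, hrest⟩ := hpref
        exact ⟨rest, by rw [← hrest]; rfl⟩

lemma suffix_of_path {B W : List V} (hW : W.Nodup) (hB : B.Nodup)
    (hne : B ≠ []) (hWne : W ≠ []) (hh : B.getLast! = W.getLast!)
    (he : ∀ u v, PEdge B u v → PEdge W u v) : B <:+ W := by
  rw [← List.reverse_prefix]
  apply prefix_of_path (List.nodup_reverse.mpr hW) (List.nodup_reverse.mpr hB) (by simpa) (by simpa)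
  · rw [head!_reverse' hne, head!_reverse' hWne]; exact hh
  · intro u v huv
    rw [pedge_reverse] at huv ⊢
    exact he _ _ huv
end Aux3
section Aux4
set_option linter.unusedSectionVars false
variable {V : Type} [Inhabited V]

lemma glue {G : V → V → Prop} {A B W : List V}
    (hW : IsPath G W) (hA : IsPath G A) (hB : IsPath G B)
    (hh : W.head! = A.head!) (hl : W.getLast! = B.getLast!)
    (hv : ∀ v, v ∈ W ↔ v ∈ A ∨ v ∈ B)
    (he : ∀ u v, PEdge W u v ↔ PEdge A u v ∨ PEdge B u v) :
    ∃ S, W = S ++ B ∧ S <+: A := by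
  have hApre : A <+: W :=
    prefix_of_path hW.2.1 hA.2.1 hA.1 hW.1 hh.symm (fun u v h => (he u v).mpr (Or.inl h))
  have hBsuf : B <:+ W :=
    suffix_of_path hW.2.1 hB.2.1 hB.1 hW.1 hl.symm (fun u v h => (he u v).mpr (Or.inr h))
  have hlen : W.length ≤ A.length + B.length := by
    have hsub : W ⊆ A ++ B := fun v hv' => by
      rcases (hv v).mp hv' with h | h
      · exact List.mem_append.mpr (Or.inl h)
      · exact List.mem_append.mpr (Or.inr h)
    have := (hW.2.1.subperm hsub).length_le
    simpa using this
  have hBlen : B.length ≤ W.length := hBsuf.length_le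
  have hAlen : A.length ≤ W.length := hApre.length_le
  have hBdrop : B = W.drop (W.length - B.length) := List.suffix_iff_eq_drop.mp hBsuf
  have hA' : A = W.take A.length := List.prefix_iff_eq_take.mp hApre
  have hb : W.length - B.length ≤ A.length := by omega
  refine ⟨W.take (W.length - B.length), ?_, ?_⟩
  · conv_lhs => rw [← List.take_append_drop (W.length - B.length) W]
    rw [← hBdrop]
  · have htk : W.take (W.length - B.length) = A.take (W.length - B.length) := by
      conv_rhs => rw [hA']
      rw [List.take_take, min_eq_left hb]
    rw [htk]
    exact List.take_prefix _ _
end Aux4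
section Aux5
set_option linter.unusedSectionVars false
variable {V : Type} [Inhabited V]

lemma lemA {G : V → V → Prop} {k : ℕ} :
    ∀ (rest : List (RailT V k)) (r : RailT V k),
      List.Chain' (RailStep G) (r :: rest) → ∀ r' ∈ rest,
      r'.2.1 ⊆ r.2.1 ∧ ∀ (j : Fin k) v, v ∈ r'.1 j → v ∈ r.1 j ∨ v ∈ r.2.1 := by
  intro rest
  induction rest with
  | nil => intro r _ r' h; simp at h
  | cons r₁ rest' ih =>
    intro r hch r' hr'
    have hstep : RailStep G r r₁ := (List.isChain_cons_cons.mp hch).1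
    have htail : List.Chain' (RailStep G) (r₁ :: rest') := (List.isChain_cons_cons.mp hch).2
    rcases List.mem_cons.mp hr' with rfl | hr'
    · exact ⟨hstep.2.2.2.2.1, fun j v hv => hstep.2.2.1 j v hv⟩
    · obtain ⟨hX, hV⟩ := ih r₁ htail r' hr'
      refine ⟨hX.trans hstep.2.2.2.2.1, fun j v hv => ?_⟩
      rcases hV j v hv with h | h
      · exact hstep.2.2.1 j v h
      · exact Or.inr (hstep.2.2.2.2.1 h)

lemma pairOrder {α : Type*} : ∀ (l : List α) (a b : α), a ∈ l → b ∈ l →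
    ∃ c l₂, (c :: l₂) <:+ l ∧
      ((a = c ∧ b ∈ c :: l₂) ∨ (b = c ∧ a ∈ c :: l₂)) := by
  intro l
  induction l with
  | nil => intro a b h; simp at h
  | cons x l' ih =>
    intro a b ha hb
    by_cases hax : a = x
    · exact ⟨x, l', List.suffix_refl _, Or.inl ⟨hax, hb⟩⟩
    by_cases hbx : b = x
    · exact ⟨x, l', List.suffix_refl _, Or.inr ⟨hbx, ha⟩⟩
    have ha' : a ∈ l' := by rcases List.mem_cons.mp ha with h | h; exact absurd h hax; exact h
    have hb' : b ∈ l' := by rcases List.mem_cons.mp hb with h | h; exact absurd h hbx; exact h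
    obtain ⟨c, l₂, hsuf, hcase⟩ := ih a b ha' hb'
    exact ⟨c, l₂, hsuf.trans (List.suffix_cons x l'), hcase⟩
end Aux5
section Aux6
set_option linter.unusedSectionVars false
variable {V : Type} [Inhabited V]

lemma head!_append_left {l₁ l₂ : List V} (h : l₁ ≠ []) : (l₁ ++ l₂).head! = l₁.head! := by
  have h1 : (l₁ ++ l₂).head? = l₁.head? := by
    rw [List.head?_append, head?_some h]; rfl
  exact head!_eq_of_head?_eq (by simp [h]) h h1

lemma getLast!_append_right {l₁ l₂ : List V} (h : l₂ ≠ []) :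
    (l₁ ++ l₂).getLast! = l₂.getLast! := by
  have h1 : (l₁ ++ l₂).getLast? = l₂.getLast? := by
    rw [List.getLast?_append, getLast?_some h]; rfl
  rw [getLast?_some (l := l₁ ++ l₂) (by simp [h]), getLast?_some h] at h1
  exact Option.some.inj h1

lemma buildOne {G : V → V → Prop} {k : ℕ} (s t : Fin k → V) (m c : ℕ) (j : Fin k) :
    ∀ rs : List (RailT V k), rs ≠ [] → rs.Chain' (RailStep G) →
    (∀ r ∈ rs, IsRail G s t m c r.1 r.2.1 r.2.2) →
    ∃ P : List V, IsPath G P ∧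
      (∀ r ∈ rs.head?, P.head! = (r.1 j).head!) ∧
      (∀ r ∈ rs.getLast?, P.getLast! = (r.1 j).getLast!) ∧
      (∀ v, v ∈ P ↔ ∃ r ∈ rs, v ∈ r.1 j) ∧
      (∀ u v, PEdge P u v ↔ ∃ r ∈ rs, PEdge (r.1 j) u v) := by
  intro rs
  induction rs with
  | nil => intro h; exact absurd rfl h
  | cons r rest ih =>
    intro _ hch hrail
    cases rest with
    | nil =>
      refine ⟨r.1 j, (hrail r (by simp)).1.1 j, ?_, ?_, ?_, ?_⟩
      · intro r' hr'; simp at hr'; subst hr'; rfl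
      · intro r' hr'; simp at hr'; subst hr'; rfl
      · intro v; simp
      · intro u v; simp
    | cons r' rest' =>
      have hstep : RailStep G r r' := (List.isChain_cons_cons.mp hch).1
      have htail : List.Chain' (RailStep G) (r' :: rest') := (List.isChain_cons_cons.mp hch).2
      obtain ⟨P', hP'path, hP'head, hP'last, hP'mem, hP'edge⟩ :=
        ih (by simp) htail (fun rr hrr => hrail rr (List.mem_cons_of_mem r hrr))
      obtain ⟨W, hWpath, hWhead, hWlast, hWmem, hWedge⟩ := hstep.2.1 j
      have hApath : IsPath G (r.1 j) := (hrail r (by simp)).1.1 j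
      have hBpath : IsPath G (r'.1 j) := (hrail r' (by simp)).1.1 j
      obtain ⟨S, hWS, hSA⟩ := glue hWpath hApath hBpath hWhead hWlast hWmem hWedge
      have hP'ne : P' ≠ [] := hP'path.1
      have hBne : r'.1 j ≠ [] := hBpath.1
      have hWnodup := hWpath.2.1
      rw [hWS] at hWnodup
      obtain ⟨hSnodup, hBnodup, hSBdisj⟩ := List.nodup_append.mp hWnodup
      have hP'head' : P'.head! = (r'.1 j).head! := hP'head r' rfl
      have hP'head? : P'.head? = (r'.1 j).head? := by
        rw [head?_some hP'ne, head?_some hBne, hP'head']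
      -- S is disjoint from P'
      have hSP'disj : ∀ v ∈ S, v ∉ P' := by
        intro v hvS hvP'
        have hvA : v ∈ r.1 j := hSA.subset hvS
        have hvnB : v ∉ r'.1 j := fun h => hSBdisj v hvS v h rfl
        obtain ⟨r'', hr'', hvr''⟩ := (hP'mem v).mp hvP'
        rcases List.mem_cons.mp hr'' with rfl | hr''
        · exact hvnB hvr''
        · rcases (lemA rest' r' htail r'' hr'').2 j v hvr'' with h | h
          · exact hvnB h
          · have : v ∈ r.2.1 := hstep.2.2.2.2.1 h
            have hXA := (hrail r (by simp)).2.2.2.2.1 this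
            exact hXA.1 j hvA
      -- chain and junction facts from W
      obtain ⟨hSchain, hBchain, hjunc⟩ := List.isChain_append.mp (hWS ▸ hWpath.2.2)
      have hjuncP' : ∀ x ∈ S.getLast?, ∀ y ∈ P'.head?, G x y := by
        intro x hx y hy
        exact hjunc x hx y (by rw [← hP'head?]; exact hy)
      refine ⟨S ++ P', ⟨?_, ?_, ?_⟩, ?_, ?_, ?_, ?_⟩
      · simp [hP'ne]
      · exact List.nodup_append.mpr ⟨hSnodup, hP'path.2.1, fun a ha b hb hab => hSP'disj a ha (hab ▸ hb)⟩
      · exact List.isChain_append.mpr ⟨hSchain, hP'path.2.2, hjuncP'⟩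
      · -- head!
        intro rr hrr
        simp only [List.head?_cons, Option.mem_def, Option.some.injEq] at hrr
        subst hrr
        by_cases hS : S = []
        · subst hS
          simp only [List.nil_append] at hWS ⊢
          rw [hP'head', ← hWhead, hWS]
        · rw [head!_append_left hS, show S.head! = W.head! from ?_, hWhead]
          rw [hWS, head!_append_left hS]
      · -- getLast!
        intro rr hrr
        rw [List.getLast?_cons_cons] at hrr
        rw [getLast!_append_right hP'ne]
        exact hP'last rr hrr
      · -- membership
        intro v
        simp only [List.mem_append]
        constructor
        · rintro (h | h)
          · exact ⟨r, by simp, hSA.subset h⟩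
          · obtain ⟨r'', hr'', hv⟩ := (hP'mem v).mp h
            exact ⟨r'', List.mem_cons_of_mem r hr'', hv⟩
        · rintro ⟨r'', hr'', hv⟩
          rcases List.mem_cons.mp hr'' with rfl | hr''
          · have : v ∈ W := (hWmem v).mpr (Or.inl hv)
            rw [hWS, List.mem_append] at this
            rcases this with h | h
            · exact Or.inl h
            · exact Or.inr ((hP'mem v).mpr ⟨r', by simp, h⟩)
          · exact Or.inr ((hP'mem v).mpr ⟨r'', hr'', hv⟩)
      · -- edges
        intro u v
        rw [pedge_append]
        constructor
        · rintro (h | h | ⟨hu, hv⟩)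
          · exact ⟨r, by simp, pedge_mono h hSA.isInfix⟩
          · obtain ⟨r'', hr'', hh⟩ := (hP'edge u v).mp h
            exact ⟨r'', List.mem_cons_of_mem r hr'', hh⟩
          · have hWuv : PEdge W u v := by
              rw [hWS, pedge_append]
              exact Or.inr (Or.inr ⟨hu, by rw [← hP'head?]; exact hv⟩)
            rcases (hWedge u v).mp hWuv with h | h
            · exact ⟨r, by simp, h⟩
            · exact ⟨r', by simp, h⟩
        · rintro ⟨r'', hr'', hh⟩
          rcases List.mem_cons.mp hr'' with rfl | hr''
          · have hWuv : PEdge W u v := (hWedge u v).mpr (Or.inl hh)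
            rw [hWS, pedge_append] at hWuv
            rcases hWuv with h | h | ⟨hu, hv⟩
            · exact Or.inl h
            · exact Or.inr (Or.inl ((hP'edge u v).mpr ⟨r', by simp, h⟩))
            · exact Or.inr (Or.inr ⟨hu, by rw [hP'head?]; exact hv⟩)
          · exact Or.inr (Or.inl ((hP'edge u v).mpr ⟨r'', hr'', hh⟩))
end Aux6
section Aux7
set_option linter.unusedSectionVars false
variable {V : Type} [Inhabited V]

lemma crossAux {G : V → V → Prop} {k : ℕ} {s t : Fin k → V} {m c : ℕ}
    {cc : RailT V k} {l₂ : List (RailT V k)}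
    (hch : List.Chain' (RailStep G) (cc :: l₂))
    (hrailc : IsRail G s t m c cc.1 cc.2.1 cc.2.2)
    (hlinc : IsLinkage G cc.1)
    {rb : RailT V k} (hrb : rb ∈ cc :: l₂) {i j : Fin k} (hij : i ≠ j)
    {v : V} (hva : v ∈ cc.1 i) (hvb : v ∈ rb.1 j) : False := by
  rcases List.mem_cons.mp hrb with rfl | hrb
  · exact hlinc.2 i j hij v hva hvb
  · rcases (lemA l₂ cc hch rb hrb).2 j v hvb with h | h
    · exact hlinc.2 i j hij v hva h
    · exact (hrailc.2.2.2.2.1 h).1 i hva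
end Aux7

theorem stmt3' {V : Type} [Fintype V] [DecidableEq V] [Inhabited V]
    (G : V → V → Prop) (hG : Irreflexive G)
    (k m c : ℕ) (s t : Fin k → V)
    (rs : List (RailT V k)) (hrs : IsTrackerPath G s t m c rs) :
    ∃ P : Fin k → List V, IsLinkageFor G s t P ∧ Traces rs P := by
  obtain ⟨hne, hnodup, hch, hrail, hheads, hlasts⟩ := hrs
  have H : ∀ j : Fin k, ∃ P : List V, IsPath G P ∧
      (∀ r ∈ rs.head?, P.head! = (r.1 j).head!) ∧
      (∀ r ∈ rs.getLast?, P.getLast! = (r.1 j).getLast!) ∧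
      (∀ v, v ∈ P ↔ ∃ r ∈ rs, v ∈ r.1 j) ∧
      (∀ u v, PEdge P u v ↔ ∃ r ∈ rs, PEdge (r.1 j) u v) :=
    fun j => buildOne s t m c j rs hne hch hrail
  choose P hPpath hPhead hPlast hPmem hPedge using H
  have hhead? : ∃ r₀, rs.head? = some r₀ := by
    cases rs with
    | nil => exact absurd rfl hne
    | cons a l => exact ⟨a, rfl⟩
  have hlast? : ∃ r₁, rs.getLast? = some r₁ := by
    cases hl : rs.getLast? with
    | none => exact absurd (List.getLast?_eq_none_iff.mp hl) hne
    | some a => exact ⟨a, rfl⟩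
  obtain ⟨r₀, hr₀⟩ := hhead?
  obtain ⟨r₁, hr₁⟩ := hlast?
  refine ⟨P, ⟨⟨fun i => hPpath i, ?_⟩, fun i => ⟨?_, ?_⟩⟩, fun j => ⟨hPmem j, hPedge j⟩⟩
  · -- pairwise disjoint
    intro i j hij v hvi hvj
    obtain ⟨ra, hra, hva⟩ := (hPmem i v).mp hvi
    obtain ⟨rb, hrb, hvb⟩ := (hPmem j v).mp hvj
    obtain ⟨cc, l₂, hsuf, hcase⟩ := pairOrder rs ra rb hra hrb
    have hchc : List.Chain' (RailStep G) (cc :: l₂) := hch.suffix hsuf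
    have hmemc : cc ∈ rs := hsuf.subset (by simp)
    have hrailc := hrail cc hmemc
    rcases hcase with ⟨rfl, hb⟩ | ⟨rfl, hb⟩
    · exact crossAux hchc hrailc hrailc.1 hb hij hva hvb
    · exact crossAux hchc hrailc hrailc.1 hb hij.symm hvb hva
  · rw [hPhead i r₀ hr₀]
    exact hheads r₀ hr₀ i
  · rw [hPlast i r₁ hr₁]
    exact hlasts r₁ hr₁ i
theorem stmt3 {V : Type} [Fintype V] [DecidableEq V] [Inhabited V]
    (G : V → V → Prop) (hG : Irreflexive G)
    (k m c : ℕ) (s t : Fin k → V)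
    (rs : List (RailT V k)) (hrs : IsTrackerPath G s t m c rs) :
    ∃ P : Fin k → List V, IsLinkageFor G s t P ∧ Traces rs P := by
  exact stmt3' G hG k m c s t rs hrs
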